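/- Let τ ∈ ℂ \ (1/2)ℤ (so q = exp(2πiτ) ≠ ±1) and let λ, α, ρ ∈ ℂ. Define the first order difference operator T' on meromorphic functions on ℂ by (T'f)(z) = (1/(q^{−1}−q))·[ (q^{ρ} + q^{−ρ} − q^{z−1+iλ} − q^{1−z−iλ})·f(z−2) + (q^{z−iλ} + q^{iλ−z} − q^{ρ} − q^{−ρ})·f(z) ] (this operator realizes π_{−λ}(Y_ρ°) for Koornwinder's twisted primitive element Y_ρ). Then a meromorphic function f on ℂ satisfies T'f = μ_α(ρ)·f (as meromorphic functions) if and only if f satisfies the first order difference equation f(z−2) = [ sin(π(iλ+α+ρ−z)τ)·sin(π(−iλ+α+ρ+z)τ) / ( sin(π(iλ+ρ−1+z)τ)·sin(π(−iλ+ρ+1−z)τ) ) ]·f(z). -/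

import Mathlib

set_option maxHeartbeats 1000000


noncomputable section

open Complex

/-- `q^u = exp(2πiτu)`. -/
def qpow (τ u : ℂ) : ℂ := Complex.exp (2 * (Real.pi : ℂ) * Complex.I * τ * u)

/-- The eigenvalue constant `μ_α(ρ) = ( q^ρ(1−q^α) + q^{−ρ}(1−q^{−α}) ) / (q − q^{−1})`. -/
def muEig (τ α ρ : ℂ) : ℂ :=
  (qpow τ ρ * (1 - qpow τ α) + qpow τ (-ρ) * (1 - qpow τ (-α))) / (qpow τ 1 - qpow τ (-1))

/-- The first order difference operator realizing `π_{−λ}(Y_ρ°)` for Koornwinder's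
twisted primitive element: `(T'f)(z) = (1/(q^{−1}−q))·[
(q^ρ + q^{−ρ} − q^{z−1+iλ} − q^{1−z−iλ})·f(z−2) +
(q^{z−iλ} + q^{iλ−z} − q^ρ − q^{−ρ})·f(z) ]`. -/
def twistOpCirc (τ lam ρ : ℂ) (f : ℂ → ℂ) (z : ℂ) : ℂ :=
  (1 / (qpow τ (-1) - qpow τ 1)) *
    ((qpow τ ρ + qpow τ (-ρ) - qpow τ (z - 1 + Complex.I * lam) -
        qpow τ (1 - z - Complex.I * lam)) * f (z - 2) +
      (qpow τ (z - Complex.I * lam) + qpow τ (Complex.I * lam - z) - qpow τ ρ -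
        qpow τ (-ρ)) * f z)

lemma aux_iff (x1 x2 y1 y2 Q a b : ℂ)
    (hx1 : x1 ≠ 0) (hx2 : x2 ≠ 0) (hy1 : y1 ≠ 0) (hy2 : y2 ≠ 0) (hQ : Q ≠ 0)
    (hQ2 : Q ^ 2 - 1 ≠ 0) (hd1 : x1 ^ 2 - 1 ≠ 0) (hd2 : x2 ^ 2 - 1 ≠ 0) :
    ((1 / (Q⁻¹ - Q)) *
       ((x1 * x2 + (x1 * x2)⁻¹ - x1 * x2⁻¹ - x2 * x1⁻¹) * a +
        (y2 * y1⁻¹ + y1 * y2⁻¹ - x1 * x2 - (x1 * x2)⁻¹) * b) =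
     ((x1 * x2 * (1 - y1 * y2 * (x1 * x2)⁻¹) +
        (x1 * x2)⁻¹ * (1 - x1 * x2 * (y1 * y2)⁻¹)) / (Q - Q⁻¹)) * b)
    ↔ a = (((y1⁻¹ - y1) * Complex.I / 2) * ((y2⁻¹ - y2) * Complex.I / 2)) /
          (((x1⁻¹ - x1) * Complex.I / 2) * ((x2⁻¹ - x2) * Complex.I / 2)) * b := by
  have hA : x1 * x2 + (x1 * x2)⁻¹ - x1 * x2⁻¹ - x2 * x1⁻¹ ≠ 0 := by
    have e : x1 * x2 + (x1 * x2)⁻¹ - x1 * x2⁻¹ - x2 * x1⁻¹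
        = (x1 ^ 2 - 1) * (x2 ^ 2 - 1) * (x1 * x2)⁻¹ := by
      field_simp
      ring
    rw [e]
    exact mul_ne_zero (mul_ne_zero hd1 hd2) (inv_ne_zero (mul_ne_zero hx1 hx2))
  have hQd : Q⁻¹ - Q ≠ 0 := by
    have e : Q⁻¹ - Q = -(Q ^ 2 - 1) * Q⁻¹ := by field_simp; ring
    rw [e]; exact mul_ne_zero (neg_ne_zero.2 hQ2) (inv_ne_zero hQ)
  have hQd' : Q - Q⁻¹ ≠ 0 := by
    have e : Q - Q⁻¹ = (Q ^ 2 - 1) * Q⁻¹ := by field_simp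
    rw [e]; exact mul_ne_zero hQ2 (inv_ne_zero hQ)
  have hs1 : x1⁻¹ - x1 ≠ 0 := by
    have e : x1⁻¹ - x1 = -(x1 ^ 2 - 1) * x1⁻¹ := by field_simp; ring
    rw [e]; exact mul_ne_zero (neg_ne_zero.2 hd1) (inv_ne_zero hx1)
  have hs2 : x2⁻¹ - x2 ≠ 0 := by
    have e : x2⁻¹ - x2 = -(x2 ^ 2 - 1) * x2⁻¹ := by field_simp; ring
    rw [e]; exact mul_ne_zero (neg_ne_zero.2 hd2) (inv_ne_zero hx2)
  have hden : (((x1⁻¹ - x1) * Complex.I / 2) * ((x2⁻¹ - x2) * Complex.I / 2)) ≠ 0 := by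
    apply mul_ne_zero <;>
      exact div_ne_zero (mul_ne_zero (by assumption) Complex.I_ne_zero) two_ne_zero
  rw [one_div, inv_mul_eq_iff_eq_mul₀ hQd, ← eq_sub_iff_add_eq,
    ← eq_inv_mul_iff_mul_eq₀ hA]
  have e0 : (Q⁻¹ - Q) *
      (((x1 * x2 * (1 - y1 * y2 * (x1 * x2)⁻¹) +
        (x1 * x2)⁻¹ * (1 - x1 * x2 * (y1 * y2)⁻¹)) / (Q - Q⁻¹)) * b)
      = -(x1 * x2 * (1 - y1 * y2 * (x1 * x2)⁻¹) +
        (x1 * x2)⁻¹ * (1 - x1 * x2 * (y1 * y2)⁻¹)) * b := by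
    rw [show Q⁻¹ - Q = -(Q - Q⁻¹) by ring, div_mul_eq_mul_div, neg_mul,
      mul_div_assoc', mul_comm (Q - Q⁻¹), mul_div_assoc, div_self hQd', mul_one]; ring
  rw [e0]
  have hden2 : (x1 ^ 2 - 1) * (x2 ^ 2 - 1) * (y1 * y2) ≠ 0 :=
    mul_ne_zero (mul_ne_zero hd1 hd2) (mul_ne_zero hy1 hy2)
  have eR : (((y1⁻¹ - y1) * Complex.I / 2) * ((y2⁻¹ - y2) * Complex.I / 2)) /
        (((x1⁻¹ - x1) * Complex.I / 2) * ((x2⁻¹ - x2) * Complex.I / 2))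
      = ((y1 ^ 2 - 1) * (y2 ^ 2 - 1) * (x1 * x2)) /
        ((x1 ^ 2 - 1) * (x2 ^ 2 - 1) * (y1 * y2)) := by
    rw [div_eq_div_iff hden hden2]
    field_simp
    ring
  rw [eR]
  have key : (x1 * x2 + (x1 * x2)⁻¹ - x1 * x2⁻¹ - x2 * x1⁻¹)⁻¹ *
      (-(x1 * x2 * (1 - y1 * y2 * (x1 * x2)⁻¹) +
        (x1 * x2)⁻¹ * (1 - x1 * x2 * (y1 * y2)⁻¹)) * b -
        (y2 * y1⁻¹ + y1 * y2⁻¹ - x1 * x2 - (x1 * x2)⁻¹) * b)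
      = ((y1 ^ 2 - 1) * (y2 ^ 2 - 1) * (x1 * x2)) /
        ((x1 ^ 2 - 1) * (x2 ^ 2 - 1) * (y1 * y2)) * b := by
    rw [inv_mul_eq_div, div_eq_iff hA, div_mul_eq_mul_div, div_mul_eq_mul_div,
      eq_div_iff hden2]
    field_simp
    ring
  rw [key]

/-- A meromorphic function `f` is an eigenfunction of `π_{−λ}(Y_ρ°)` with eigenvalue
`μ_α(ρ)` (as meromorphic functions, i.e. away from the zeros of the denominators)
if and only if it satisfies the first order difference equation
`f(z−2) = [sin(π(iλ+α+ρ−z)τ)·sin(π(−iλ+α+ρ+z)τ) /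
  (sin(π(iλ+ρ−1+z)τ)·sin(π(−iλ+ρ+1−z)τ))]·f(z)`. -/
theorem twisted_primitive_circ_eigenfunction_iff (τ : ℂ)
    (hτ : ∀ n : ℤ, 2 * τ ≠ (n : ℂ)) (lam α ρ : ℂ) (f : ℂ → ℂ)
    (hf : MeromorphicOn f Set.univ) :
    (∀ z : ℂ,
        Complex.sin ((Real.pi : ℂ) * (Complex.I * lam + ρ - 1 + z) * τ) ≠ 0 →
        Complex.sin ((Real.pi : ℂ) * (-(Complex.I * lam) + ρ + 1 - z) * τ) ≠ 0 →
        twistOpCirc τ lam ρ f z = muEig τ α ρ * f z) ↔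
    (∀ z : ℂ,
        Complex.sin ((Real.pi : ℂ) * (Complex.I * lam + ρ - 1 + z) * τ) ≠ 0 →
        Complex.sin ((Real.pi : ℂ) * (-(Complex.I * lam) + ρ + 1 - z) * τ) ≠ 0 →
        f (z - 2) =
          (Complex.sin ((Real.pi : ℂ) * (Complex.I * lam + α + ρ - z) * τ) *
              Complex.sin ((Real.pi : ℂ) * (-(Complex.I * lam) + α + ρ + z) * τ)) /
            (Complex.sin ((Real.pi : ℂ) * (Complex.I * lam + ρ - 1 + z) * τ) *
              Complex.sin ((Real.pi : ℂ) * (-(Complex.I * lam) + ρ + 1 - z) * τ)) * f z) := by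
  have hQ : qpow τ 1 ≠ 0 := Complex.exp_ne_zero _
  have hQ2 : (qpow τ 1) ^ 2 - 1 ≠ 0 := by
    intro h
    have e : (qpow τ 1) ^ 2 = Complex.exp ((2 * τ) * (2 * (Real.pi : ℂ) * Complex.I)) := by
      rw [qpow, sq, ← Complex.exp_add]; congr 1; ring
    have h1 : Complex.exp ((2 * τ) * (2 * (Real.pi : ℂ) * Complex.I)) = 1 := by
      rw [← e]; linear_combination h
    obtain ⟨n, hn⟩ := Complex.exp_eq_one_iff.mp h1
    refine hτ n (mul_right_cancel₀ ?_ hn)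
    simp [Real.pi_ne_zero, Complex.I_ne_zero]
  apply forall_congr'
  intro z
  refine imp_congr_right fun h1 => imp_congr_right fun h2 => ?_
  set s1 := (Real.pi : ℂ) * (Complex.I * lam + ρ - 1 + z) * τ with hs1
  set s2 := (Real.pi : ℂ) * (-(Complex.I * lam) + ρ + 1 - z) * τ with hs2
  set t1 := (Real.pi : ℂ) * (Complex.I * lam + α + ρ - z) * τ with ht1
  set t2 := (Real.pi : ℂ) * (-(Complex.I * lam) + α + ρ + z) * τ with ht2
  set x1 := Complex.exp (s1 * Complex.I) with hx1d
  set x2 := Complex.exp (s2 * Complex.I) with hx2d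
  set y1 := Complex.exp (t1 * Complex.I) with hy1d
  set y2 := Complex.exp (t2 * Complex.I) with hy2d
  have hx1 : x1 ≠ 0 := Complex.exp_ne_zero _
  have hx2 : x2 ≠ 0 := Complex.exp_ne_zero _
  have hy1 : y1 ≠ 0 := Complex.exp_ne_zero _
  have hy2 : y2 ≠ 0 := Complex.exp_ne_zero _
  have esin1 : Complex.sin s1 = (x1⁻¹ - x1) * Complex.I / 2 := by
    rw [hx1d, ← Complex.exp_neg, Complex.sin, neg_mul]
  have esin2 : Complex.sin s2 = (x2⁻¹ - x2) * Complex.I / 2 := by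
    rw [hx2d, ← Complex.exp_neg, Complex.sin, neg_mul]
  have esin3 : Complex.sin t1 = (y1⁻¹ - y1) * Complex.I / 2 := by
    rw [hy1d, ← Complex.exp_neg, Complex.sin, neg_mul]
  have esin4 : Complex.sin t2 = (y2⁻¹ - y2) * Complex.I / 2 := by
    rw [hy2d, ← Complex.exp_neg, Complex.sin, neg_mul]
  have hd1 : x1 ^ 2 - 1 ≠ 0 := by
    intro h
    apply h1
    rw [esin1]
    have : x1⁻¹ - x1 = 0 := by
      rw [inv_eq_one_div, div_sub' hx1]
      simp only [div_eq_zero_iff]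
      left; linear_combination -h
    rw [this]; ring
  have hd2 : x2 ^ 2 - 1 ≠ 0 := by
    intro h
    apply h2
    rw [esin2]
    have : x2⁻¹ - x2 = 0 := by
      rw [inv_eq_one_div, div_sub' hx2]
      simp only [div_eq_zero_iff]
      left; linear_combination -h
    rw [this]; ring
  have eρ : qpow τ ρ = x1 * x2 := by
    rw [hx1d, hx2d, ← Complex.exp_add, qpow]; congr 1; rw [hs1, hs2]; ring
  have eρ' : qpow τ (-ρ) = (x1 * x2)⁻¹ := by
    rw [hx1d, hx2d, mul_inv, ← Complex.exp_neg, ← Complex.exp_neg, ← Complex.exp_add, qpow]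
    congr 1; rw [hs1, hs2]; ring
  have ea1 : qpow τ (z - 1 + Complex.I * lam) = x1 * x2⁻¹ := by
    rw [hx1d, hx2d, ← Complex.exp_neg, ← Complex.exp_add, qpow]
    congr 1; rw [hs1, hs2]; ring
  have ea2 : qpow τ (1 - z - Complex.I * lam) = x2 * x1⁻¹ := by
    rw [hx1d, hx2d, ← Complex.exp_neg, ← Complex.exp_add, qpow]
    congr 1; rw [hs1, hs2]; ring
  have eb1 : qpow τ (z - Complex.I * lam) = y2 * y1⁻¹ := by
    rw [hy1d, hy2d, ← Complex.exp_neg, ← Complex.exp_add, qpow]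
    congr 1; rw [ht1, ht2]; ring
  have eb2 : qpow τ (Complex.I * lam - z) = y1 * y2⁻¹ := by
    rw [hy1d, hy2d, ← Complex.exp_neg, ← Complex.exp_add, qpow]
    congr 1; rw [ht1, ht2]; ring
  have eα : qpow τ α = y1 * y2 * (x1 * x2)⁻¹ := by
    rw [hx1d, hx2d, hy1d, hy2d, mul_inv, ← Complex.exp_neg, ← Complex.exp_neg,
      ← Complex.exp_add, ← Complex.exp_add, ← Complex.exp_add, qpow]
    congr 1; rw [hs1, hs2, ht1, ht2]; ring
  have eα' : qpow τ (-α) = x1 * x2 * (y1 * y2)⁻¹ := by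
    rw [hx1d, hx2d, hy1d, hy2d, mul_inv, ← Complex.exp_neg, ← Complex.exp_neg,
      ← Complex.exp_add, ← Complex.exp_add, ← Complex.exp_add, qpow]
    congr 1; rw [hs1, hs2, ht1, ht2]; ring
  have e1' : qpow τ (-1) = (qpow τ 1)⁻¹ := by
    rw [qpow, qpow, ← Complex.exp_neg]; congr 1; ring
  have eop : twistOpCirc τ lam ρ f z =
      (1 / ((qpow τ 1)⁻¹ - qpow τ 1)) *
        ((x1 * x2 + (x1 * x2)⁻¹ - x1 * x2⁻¹ - x2 * x1⁻¹) * f (z - 2) +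
          (y2 * y1⁻¹ + y1 * y2⁻¹ - x1 * x2 - (x1 * x2)⁻¹) * f z) := by
    rw [twistOpCirc, eρ, eρ', ea1, ea2, eb1, eb2, e1']
  have emu : muEig τ α ρ =
      (x1 * x2 * (1 - y1 * y2 * (x1 * x2)⁻¹) +
        (x1 * x2)⁻¹ * (1 - x1 * x2 * (y1 * y2)⁻¹)) / (qpow τ 1 - (qpow τ 1)⁻¹) := by
    rw [muEig, eρ, eρ', eα, eα', e1']
  rw [eop, emu, esin1, esin2, esin3, esin4]
  exact aux_iff x1 x2 y1 y2 (qpow τ 1) (f (z - 2)) (f z) hx1 hx2 hy1 hy2 hQ hQ2 hd1 hd2
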